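/- Suppose the weighted empirical loss L_{α,n} satisfies the uniform RSC condition with parameters (γ, τ, α₀, r), and ρ_λ is a μ-amenable penalty with (3/4)μ < γ. Let β̂ be a stationary point of the program min_{‖β‖₁ ≤ R} {L_{α,n}(β) + ρ_λ(β)} satisfying ‖β̂ − β*‖₂ ≤ r, where β* is s-sparse. If R ≥ ‖β*‖₁, λ ≥ max{4‖∇L_{α,n}(β*)‖_∞, 8τ R (log p)/n}, and n ≥ C₀ r^{−2} k log p for a universal constant C₀ (k the exponent from Assumption 2(iii)), then ‖β̂ − β*‖₂ ≤ 24λ√s/(4γ − 3μ) and ‖β̂ − β*‖₁ ≤ 96λ s/(4γ − 3μ). -/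

import Mathlib

open MeasureTheory ProbabilityTheory Filter Real
open scoped RealInnerProductSpace

noncomputable section

/-- The ℓ¹ norm of a vector. -/
def l1Norm {p : ℕ} (β : EuclideanSpace ℝ (Fin p)) : ℝ := ∑ j, |β j|

/-- The ℓ^∞ norm of a vector. -/
def supNorm {p : ℕ} (β : EuclideanSpace ℝ (Fin p)) : ℝ := ⨆ j, |β j|

/-- Assumption 2 of the paper: a family of robust losses `l α` with first derivative `l' α`
(everywhere) and second derivative `l'' α` (almost everywhere). -/
structure LossAssumption (l l' l'' : ℝ → ℝ → ℝ) (k₁ k₂ d₁ : ℝ) (k : ℕ) : Prop where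
  k₁_pos : 0 < k₁
  k₂_pos : 0 < k₂
  d₁_pos : 0 < d₁
  k_ge_two : 2 ≤ k
  hasDeriv : ∀ α > (0:ℝ), ∀ u : ℝ, HasDerivAt (l α) (l' α u) u
  hasDeriv2 : ∀ α > (0:ℝ), ∀ᵐ u ∂(volume : Measure ℝ), HasDerivAt (l' α) (l'' α u) u
  deriv_bound : ∀ α > (0:ℝ), ∀ u : ℝ, |l' α u| ≤ k₁ * α
  deriv_zero : ∀ α > (0:ℝ), l' α 0 = 0
  lipschitz : ∀ α > (0:ℝ), LipschitzWith k₂.toNNReal (l' α)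
  second_deriv_approx : ∀ α > (0:ℝ), ∀ᵐ u ∂(volume : Measure ℝ),
    |u| ≤ α → |1 - l'' α u| ≤ d₁ * |u| ^ k / α ^ k

/-- A random real variable is sub-Gaussian with variance proxy `σ2`. -/
def SubGaussianWith {Ω : Type*} [MeasurableSpace Ω] (μ : Measure Ω) (X : Ω → ℝ) (σ2 : ℝ) :
    Prop :=
  ∀ t : ℝ, ∫ ω, Real.exp (t * X ω) ∂μ ≤ Real.exp (σ2 * t ^ 2 / 2)

/-- Assumption 3 of the paper, for a single observation `(x, ε)` with weight functions
`w, v`. -/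
structure MomentAssumption {Ω : Type*} [MeasurableSpace Ω] (μ : Measure Ω) {p : ℕ}
    (x : Ω → EuclideanSpace ℝ (Fin p)) (ε : Ω → ℝ)
    (w v : EuclideanSpace ℝ (Fin p) → ℝ)
    (k : ℕ) (Mk qk kl ku k₀ : ℝ) : Prop where
  mean_zero : ∀ j, ∫ ω, x ω j ∂μ = 0
  cond_mean_zero : μ[ε | MeasurableSpace.comap x inferInstance] =ᵐ[μ] 0
  cond_moment : ∫ ω, ((μ[fun ω' => |ε ω'| ^ k | MeasurableSpace.comap x inferInstance]) ω
      * (v (x ω)) ^ k) ^ 2 ∂μ ≤ Mk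
  dir_moment : ∀ u : EuclideanSpace ℝ (Fin p), ‖u‖ = 1 →
      ∫ ω, (v (x ω) * ⟪x ω, u⟫) ^ (2 * k) ∂μ ≤ qk
  kl_pos : 0 < kl
  eig_lower : ∀ ν : EuclideanSpace ℝ (Fin p), ν ≠ 0 →
      kl * ‖ν‖ ^ 2 < ∫ ω, w (x ω) * v (x ω) * ⟪x ω, ν⟫ ^ 2 ∂μ
  eig_upper : ∀ ν : EuclideanSpace ℝ (Fin p), ν ≠ 0 →
      (∫ ω, (w (x ω)) ^ 2 * ⟪x ω, ν⟫ ^ 2 ∂μ) < ku * ‖ν‖ ^ 2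
  subgaussian : ∀ ν : EuclideanSpace ℝ (Fin p),
      SubGaussianWith μ (fun ω => w (x ω) * ⟪x ω, ν⟫) (k₀ ^ 2 * ‖ν‖ ^ 2)

/-- The weighted empirical loss `L_{α,n}` built from realized data `(X i, Y i)`. -/
def empLoss {p n : ℕ} (X : Fin n → EuclideanSpace ℝ (Fin p)) (Y : Fin n → ℝ)
    (w v : EuclideanSpace ℝ (Fin p) → ℝ) (l : ℝ → ℝ → ℝ) (α : ℝ)
    (β : EuclideanSpace ℝ (Fin p)) : ℝ :=
  (1 / (n : ℝ)) * ∑ i, (w (X i) / v (X i)) * l α ((Y i - ⟪X i, β⟫) * v (X i))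

/-- The coordinatewise "gradient" of a separable penalty. -/
def penGrad {p : ℕ} (ρ : ℝ → ℝ) (β : EuclideanSpace ℝ (Fin p)) : EuclideanSpace ℝ (Fin p) :=
  (EuclideanSpace.equiv (Fin p) ℝ).symm fun j => deriv ρ (β j)

/-- A `μa`-amenable penalty with regularization level `lam` (Assumption 1(i)-(vi)). -/
structure AmenablePenalty (ρ : ℝ → ℝ) (lam μa : ℝ) : Prop where
  symm : ∀ t : ℝ, ρ (-t) = ρ t
  zero : ρ 0 = 0
  mono : MonotoneOn ρ (Set.Ici 0)
  ratio_anti : AntitoneOn (fun t => ρ t / t) (Set.Ioi 0)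
  differentiable : ∀ t : ℝ, t ≠ 0 → DifferentiableAt ℝ ρ t
  deriv_lim : Tendsto (deriv ρ) (nhdsWithin 0 (Set.Ioi 0)) (nhds lam)
  conv : ConvexOn ℝ Set.univ fun t => ρ t + μa / 2 * t ^ 2

/-- Stationary point of the penalized program with side constraint `‖β‖₁ ≤ R`. -/
def StationaryPoint {p : ℕ} (L : EuclideanSpace ℝ (Fin p) → ℝ) (ρ : ℝ → ℝ) (R : ℝ)
    (βt : EuclideanSpace ℝ (Fin p)) : Prop :=
  l1Norm βt ≤ R ∧ ∃ U ∈ nhds βt, ∀ β ∈ U, l1Norm β ≤ R →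
    0 ≤ ⟪gradient L βt + penGrad ρ βt, β - βt⟫

/-- The uniform restricted strong convexity condition (Assumption 4). -/
def UniformRSC {p : ℕ} (L : ℝ → EuclideanSpace ℝ (Fin p) → ℝ)
    (βstar : EuclideanSpace ℝ (Fin p)) (γ τ α₀ r : ℝ) (n : ℕ) : Prop :=
  ∀ α : ℝ, α₀ ≤ α → ∀ β₁ β₂ : EuclideanSpace ℝ (Fin p),
    ‖β₁ - βstar‖ ≤ r → ‖β₂ - βstar‖ ≤ r →
    γ * ‖β₁ - β₂‖ ^ 2 - τ * (Real.log p / n) * (l1Norm (β₁ - β₂)) ^ 2 ≤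
      ⟪gradient (L α) β₁ - gradient (L α) β₂, β₁ - β₂⟫

/-! ### Auxiliary lemmas -/

section Aux

variable {ρ : ℝ → ℝ} {lam μa : ℝ}

lemma AmenablePenalty.continuous' (h : AmenablePenalty ρ lam μa) : Continuous ρ := by
  have h1 : Continuous fun t : ℝ => ρ t + μa / 2 * t ^ 2 :=
    continuousOn_univ.mp (h.conv.continuousOn isOpen_univ)
  have : Continuous fun t : ℝ => (ρ t + μa / 2 * t ^ 2) - μa / 2 * t ^ 2 :=
    h1.sub (by continuity)
  simpa using this

lemma AmenablePenalty.nonneg (h : AmenablePenalty ρ lam μa) (t : ℝ) : 0 ≤ ρ t := by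
  rcases le_total 0 t with ht | ht
  · have := h.mono (le_refl (0:ℝ)) (Set.mem_Ici.mpr ht) ht
    simpa [h.zero] using this
  · have := h.mono (le_refl (0:ℝ)) (Set.mem_Ici.mpr (neg_nonneg.mpr ht)) (neg_nonneg.mpr ht)
    simpa [h.zero, h.symm] using this

lemma AmenablePenalty.ratio_tendsto (h : AmenablePenalty ρ lam μa) :
    Tendsto (fun s => ρ s / s) (nhdsWithin 0 (Set.Ioi 0)) (nhds lam) := by
  have hdl := h.deriv_lim
  rw [Metric.tendsto_nhdsWithin_nhds] at hdl ⊢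
  intro ε hε
  obtain ⟨δ, hδ, hd⟩ := hdl ε hε
  refine ⟨δ, hδ, fun {s} hs hsd => ?_⟩
  have hs0 : (0:ℝ) < s := hs
  obtain ⟨c, hc, hcd⟩ := exists_hasDerivAt_eq_slope ρ (deriv ρ) hs0
    (h.continuous'.continuousOn)
    (fun x hx => (h.differentiable x (ne_of_gt hx.1)).hasDerivAt)
  have heq : ρ s / s = deriv ρ c := by
    rw [hcd, h.zero]; ring
  rw [heq]
  apply hd hc.1
  rw [Real.dist_eq] at hsd ⊢
  have : |c| < |s| := by
    rw [abs_of_pos hc.1, abs_of_pos hs0]; exact hc.2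
  simpa using lt_trans (by simpa using this) (by simpa using hsd)

lemma AmenablePenalty.le_lam_mul (h : AmenablePenalty ρ lam μa) (t : ℝ) :
    ρ t ≤ lam * |t| := by
  have key : ∀ u : ℝ, 0 < u → ρ u / u ≤ lam := by
    intro u hu
    refine ge_of_tendsto h.ratio_tendsto ?_
    filter_upwards [Ioo_mem_nhdsGT_of_mem (by constructor <;> simp [hu] : (0:ℝ) ∈ Set.Ico 0 u)]
      with s hs
    exact h.ratio_anti hs.1 hu hs.2.le
  rcases lt_trichotomy t 0 with ht | ht | ht
  · have := key (-t) (by linarith)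
    have h2 : ρ (-t) ≤ lam * (-t) := by
      rw [div_le_iff₀ (by linarith)] at this; linarith
    rw [h.symm] at h2; rw [abs_of_neg ht]; linarith
  · simp [ht, h.zero]
  · have := key t ht
    rw [div_le_iff₀ ht] at this
    rw [abs_of_pos ht]; linarith

lemma AmenablePenalty.lam_nonneg (h : AmenablePenalty ρ lam μa) : 0 ≤ lam := by
  have := h.le_lam_mul 1
  have h0 := h.nonneg 1
  simp at this; linarith

lemma AmenablePenalty.lam_mul_le (h : AmenablePenalty ρ lam μa) (t : ℝ) :
    lam * |t| ≤ ρ t + μa / 2 * t ^ 2 := by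
  set f : ℝ → ℝ := fun t => ρ t + μa / 2 * t ^ 2 with hf
  have hfe : ∀ t, f (-t) = f t := by intro t; simp [hf, h.symm]
  have key : ∀ u : ℝ, 0 < u → lam ≤ f u / u := by
    intro u hu
    have hs : Tendsto (fun s => f s / s) (nhdsWithin 0 (Set.Ioi 0)) (nhds lam) := by
      have h2 : Tendsto (fun s : ℝ => ρ s / s + μa / 2 * s) (nhdsWithin 0 (Set.Ioi 0))
          (nhds (lam + μa / 2 * 0)) := by
        apply Tendsto.add h.ratio_tendsto
        exact Tendsto.mono_left ((continuous_const.mul continuous_id).tendsto 0)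
          nhdsWithin_le_nhds
      simp only [mul_zero, add_zero] at h2
      refine h2.congr' ?_
      filter_upwards [self_mem_nhdsWithin] with s hs
      have hs0 : s ≠ 0 := ne_of_gt hs
      field_simp [hf]; ring
    refine le_of_tendsto hs ?_
    filter_upwards [Ioo_mem_nhdsGT_of_mem (by constructor <;> simp [hu] : (0:ℝ) ∈ Set.Ico 0 u)]
      with s hs
    have := h.conv.secant_mono (Set.mem_univ 0) (Set.mem_univ s) (Set.mem_univ u)
      (ne_of_gt hs.1) (ne_of_gt hu) hs.2.le
    simpa [hf, h.zero] using this
  rcases lt_trichotomy t 0 with ht | ht | ht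
  · have := key (-t) (by linarith)
    rw [le_div_iff₀ (by linarith)] at this
    rw [hfe] at this
    rw [abs_of_neg ht]
    simpa [hf] using this
  · simp [ht, h.zero]
  · have := key t ht
    rw [le_div_iff₀ ht] at this
    rw [abs_of_pos ht]
    simpa [hf] using this

lemma AmenablePenalty.subadd (h : AmenablePenalty ρ lam μa) (x y : ℝ) :
    ρ (x + y) ≤ ρ x + ρ y := by
  have habs : ∀ t : ℝ, ρ t = ρ |t| := by
    intro t
    rcases le_or_gt 0 t with ht | ht
    · rw [abs_of_nonneg ht]
    · rw [abs_of_neg ht, h.symm]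
  have key : ∀ a b : ℝ, 0 ≤ a → 0 ≤ b → ρ (a + b) ≤ ρ a + ρ b := by
    intro a b ha hb
    rcases eq_or_lt_of_le ha with rfl | ha'
    · simp [h.zero]
    rcases eq_or_lt_of_le hb with rfl | hb'
    · simp [h.zero]
    have hab : 0 < a + b := by linarith
    have h1 : ρ (a + b) / (a + b) ≤ ρ a / a := h.ratio_anti ha' hab (by linarith)
    have h2 : ρ (a + b) / (a + b) ≤ ρ b / b := h.ratio_anti hb' hab (by linarith)
    rw [div_le_div_iff₀ hab ha'] at h1
    rw [div_le_div_iff₀ hab hb'] at h2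
    nlinarith
  calc ρ (x + y) = ρ |x + y| := habs _
    _ ≤ ρ (|x| + |y|) := h.mono (Set.mem_Ici.mpr (abs_nonneg _)) (by positivity : (0:ℝ) ≤ |x| + |y|)
        (abs_add_le x y)
    _ ≤ ρ |x| + ρ |y| := key _ _ (abs_nonneg _) (abs_nonneg _)
    _ = ρ x + ρ y := by rw [← habs, ← habs]

lemma AmenablePenalty.deriv_zero_eq (h : AmenablePenalty ρ lam μa) : deriv ρ 0 = 0 := by
  by_cases hd : DifferentiableAt ℝ ρ 0
  · have h1 : HasDerivAt ρ (deriv ρ 0) 0 := hd.hasDerivAt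
    have h1' : HasDerivAt ρ (deriv ρ 0) (-0) := by simpa using h1
    have h2 := h1'.comp 0 (hasDerivAt_neg 0)
    simp only [Function.comp_def, h.symm] at h2
    have := h1.unique h2
    simp at this
    linarith
  · exact deriv_zero_of_not_differentiableAt hd

lemma AmenablePenalty.grad_ineq (h : AmenablePenalty ρ lam μa) (hμ : 0 ≤ μa) (a b : ℝ) :
    deriv ρ a * (b - a) ≤ ρ b - ρ a + μa / 2 * (b - a) ^ 2 := by
  rcases eq_or_ne a 0 with rfl | ha
  · rw [h.deriv_zero_eq, h.zero]
    have := h.nonneg b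
    nlinarith
  set f : ℝ → ℝ := fun t => ρ t + μa / 2 * t ^ 2 with hf
  have hfd : DifferentiableAt ℝ f a := by
    apply DifferentiableAt.add (h.differentiable a ha); fun_prop
  have hfd' : deriv f a = deriv ρ a + μa * a := by
    rw [hf]
    rw [deriv_fun_add (h.differentiable a ha) (by fun_prop)]
    simp [deriv_pow_field]
    ring
  rcases lt_trichotomy a b with hab | rfl | hab
  · have := h.conv.deriv_le_slope (Set.mem_univ a) (Set.mem_univ b) hab hfd
    rw [slope_def_field, hfd'] at this
    rw [le_div_iff₀ (by linarith : (0:ℝ) < b - a)] at this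
    nlinarith [this]
  · simp
  · have := h.conv.slope_le_deriv (Set.mem_univ b) (Set.mem_univ a) hab hfd
    rw [slope_def_field, div_le_iff₀ (by linarith : (0:ℝ) < a - b), hfd'] at this
    nlinarith [this]

lemma AmenablePenalty.deriv_nonneg' (h : AmenablePenalty ρ lam μa) {a : ℝ} (ha : 0 < a) :
    0 ≤ deriv ρ a := by
  have hd := (h.differentiable a (ne_of_gt ha)).hasDerivAt
  rw [hasDerivAt_iff_tendsto_slope] at hd
  refine ge_of_tendsto hd ?_
  have hmem : Set.Ioo (0:ℝ) (a + a) ∈ nhds a := Ioo_mem_nhds (by linarith) (by linarith)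
  filter_upwards [mem_nhdsWithin_of_mem_nhds hmem, self_mem_nhdsWithin] with x hx hne
  rw [slope_def_field]
  rcases lt_or_gt_of_ne (by simpa [Set.mem_compl_iff] using hne : x ≠ a) with hxa | hxa
  · have h1 : ρ x - ρ a ≤ 0 := by
      have := h.mono (Set.mem_Ici.mpr hx.1.le) (Set.mem_Ici.mpr ha.le) hxa.le
      linarith
    have h2 : x - a < 0 := by linarith
    have := div_nonneg (neg_nonneg.mpr h1) (neg_nonneg.mpr h2.le)
    rw [neg_div_neg_eq] at this
    exact this
  · apply div_nonneg
    · have := h.mono (Set.mem_Ici.mpr ha.le) (Set.mem_Ici.mpr (by linarith : (0:ℝ) ≤ x)) hxa.le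
      linarith
    · linarith

lemma AmenablePenalty.deriv_mul_self_nonneg (h : AmenablePenalty ρ lam μa) (a : ℝ) :
    0 ≤ deriv ρ a * a := by
  rcases lt_trichotomy a 0 with ha | rfl | ha
  · -- deriv ρ a = - deriv ρ (-a)
    have h1 : HasDerivAt ρ (deriv ρ (-a)) (-a) :=
      (h.differentiable (-a) (by linarith)).hasDerivAt
    have h2 := h1.comp a (hasDerivAt_neg a)
    simp only [Function.comp_def, h.symm] at h2
    have h3 : deriv ρ a = deriv ρ (-a) * (-1) := h2.deriv
    have h4 : 0 ≤ deriv ρ (-a) := h.deriv_nonneg' (by linarith)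
    nlinarith
  · simp
  · exact mul_nonneg (h.deriv_nonneg' ha) ha.le

end Aux

section VecAux

variable {p : ℕ}

lemma inner_eq_sum (a b : EuclideanSpace ℝ (Fin p)) : ⟪a, b⟫ = ∑ j, a j * b j := by
  simp [PiLp.inner_apply, RCLike.inner_apply, mul_comm]

lemma norm_sq_eq_sum (a : EuclideanSpace ℝ (Fin p)) : ‖a‖ ^ 2 = ∑ j, (a j) ^ 2 := by
  rw [← real_inner_self_eq_norm_sq, inner_eq_sum]
  congr 1; ext j; ring

lemma l1Norm_nonneg (a : EuclideanSpace ℝ (Fin p)) : 0 ≤ l1Norm a :=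
  Finset.sum_nonneg fun j _ => abs_nonneg _

lemma abs_le_supNorm [NeZero p] (a : EuclideanSpace ℝ (Fin p)) (j : Fin p) :
    |a j| ≤ supNorm a := by
  exact le_ciSup (Set.Finite.bddAbove (Set.finite_range fun i => |a i|)) j

lemma inner_le_supNorm_mul [NeZero p] (a b : EuclideanSpace ℝ (Fin p)) :
    ⟪a, b⟫ ≤ supNorm a * l1Norm b := by
  rw [inner_eq_sum, l1Norm, Finset.mul_sum]
  apply Finset.sum_le_sum
  intro j _
  calc a j * b j ≤ |a j * b j| := le_abs_self _
    _ = |a j| * |b j| := abs_mul _ _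
    _ ≤ supNorm a * |b j| :=
        mul_le_mul_of_nonneg_right (abs_le_supNorm a j) (abs_nonneg _)

lemma l1_sub_le (a b : EuclideanSpace ℝ (Fin p)) :
    l1Norm (a - b) ≤ l1Norm a + l1Norm b := by
  rw [l1Norm, l1Norm, l1Norm, ← Finset.sum_add_distrib]
  apply Finset.sum_le_sum
  intro j _
  simpa using abs_sub (a j) (b j)

lemma sum_abs_le_sqrt_card_mul {ν : EuclideanSpace ℝ (Fin p)} (S : Finset (Fin p)) :
    ∑ j ∈ S, |ν j| ≤ Real.sqrt S.card * ‖ν‖ := by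
  have h1 : (∑ j ∈ S, |ν j|) ^ 2 ≤ S.card * ∑ j ∈ S, |ν j| ^ 2 :=
    sq_sum_le_card_mul_sum_sq
  have h2 : ∑ j ∈ S, |ν j| ^ 2 ≤ ‖ν‖ ^ 2 := by
    rw [norm_sq_eq_sum]
    calc ∑ j ∈ S, |ν j| ^ 2 = ∑ j ∈ S, ν j ^ 2 := by
          apply Finset.sum_congr rfl; intro j _; rw [sq_abs]
      _ ≤ ∑ j, ν j ^ 2 :=
          Finset.sum_le_sum_of_subset_of_nonneg (Finset.subset_univ S)
            (fun j _ _ => sq_nonneg _)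
  have h3 : (∑ j ∈ S, |ν j|) ^ 2 ≤ (Real.sqrt S.card * ‖ν‖) ^ 2 := by
    rw [mul_pow, Real.sq_sqrt (by positivity)]
    calc (∑ j ∈ S, |ν j|) ^ 2 ≤ S.card * ∑ j ∈ S, |ν j| ^ 2 := h1
      _ ≤ S.card * ‖ν‖ ^ 2 := mul_le_mul_of_nonneg_left h2 (by positivity)
  have hnn : 0 ≤ ∑ j ∈ S, |ν j| := Finset.sum_nonneg fun j _ => abs_nonneg _
  have hnn2 : 0 ≤ Real.sqrt S.card * ‖ν‖ := by positivity
  exact (pow_le_pow_iff_left₀ hnn hnn2 two_ne_zero).mp h3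

lemma stationary_inner {L : EuclideanSpace ℝ (Fin p) → ℝ} {ρ : ℝ → ℝ} {R : ℝ}
    {βt βs : EuclideanSpace ℝ (Fin p)} (h : StationaryPoint L ρ R βt)
    (hfeas : l1Norm βs ≤ R) :
    0 ≤ ⟪gradient L βt + penGrad ρ βt, βs - βt⟫ := by
  obtain ⟨hfeas0, U, hU, hmem⟩ := h
  rcases eq_or_ne βs βt with rfl | hne
  · simp
  set d := βs - βt with hd
  have hdne : d ≠ 0 := sub_ne_zero.mpr hne
  have hdpos : 0 < ‖d‖ := norm_pos_iff.mpr hdne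
  obtain ⟨ε, hε, hball⟩ := Metric.mem_nhds_iff.mp hU
  set t : ℝ := min 1 (ε / (2 * ‖d‖)) with htdef
  have ht0 : 0 < t := lt_min one_pos (by positivity)
  have ht1 : t ≤ 1 := min_le_left _ _
  set βc := βt + t • d with hβc
  have hmemU : βc ∈ U := by
    apply hball
    rw [Metric.mem_ball, dist_eq_norm]
    have : βc - βt = t • d := by rw [hβc]; abel
    rw [this, norm_smul, Real.norm_eq_abs, abs_of_pos ht0]
    calc t * ‖d‖ ≤ ε / (2 * ‖d‖) * ‖d‖ :=
          mul_le_mul_of_nonneg_right (min_le_right _ _) hdpos.le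
      _ = ε / 2 := by field_simp
      _ < ε := by linarith
  have hfeasc : l1Norm βc ≤ R := by
    have hcoord : ∀ j, |βc j| ≤ (1 - t) * |βt j| + t * |βs j| := by
      intro j
      have hco : βc j = (1 - t) * βt j + t * βs j := by
        simp only [hβc, hd, PiLp.add_apply, PiLp.smul_apply, PiLp.sub_apply, smul_eq_mul]
        ring
      rw [hco]
      calc |(1 - t) * βt j + t * βs j| ≤ |(1 - t) * βt j| + |t * βs j| := abs_add_le _ _
        _ = (1 - t) * |βt j| + t * |βs j| := by
            rw [abs_mul, abs_mul, abs_of_nonneg (by linarith), abs_of_nonneg ht0.le]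
    calc l1Norm βc ≤ ∑ j, ((1 - t) * |βt j| + t * |βs j|) :=
          Finset.sum_le_sum fun j _ => hcoord j
      _ = (1 - t) * l1Norm βt + t * l1Norm βs := by
          rw [l1Norm, l1Norm, Finset.sum_add_distrib, Finset.mul_sum, Finset.mul_sum]
      _ ≤ (1 - t) * R + t * R := by
          apply add_le_add
          · exact mul_le_mul_of_nonneg_left hfeas0 (by linarith)
          · exact mul_le_mul_of_nonneg_left hfeas ht0.le
      _ = R := by ring
  have := hmem βc hmemU hfeasc
  have hsub : βc - βt = t • d := by rw [hβc]; abel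
  rw [hsub, real_inner_smul_right] at this
  exact nonneg_of_mul_nonneg_right (by linarith) ht0

end VecAux
set_option maxHeartbeats 1000000 in
/-- Theorem 2(ii): there is a universal constant `C₀ > 0` such that, if the
weighted empirical loss satisfies the uniform RSC condition, `ρ_λ` is `μ`-amenable with
`(3/4)μ < γ`, `β̂` is a stationary point of the `ℓ₁`-constrained penalized program with
`‖β̂ − β*‖₂ ≤ r`, `β*` is `s`-sparse, `R ≥ ‖β*‖₁`,
`λ ≥ max{4‖∇L_{α,n}(β*)‖_∞, 8τR log p/n}` and `n ≥ C₀ r⁻² k log p`, then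
`‖β̂ − β*‖₂ ≤ 24λ√s/(4γ − 3μ)` and `‖β̂ − β*‖₁ ≤ 96λs/(4γ − 3μ)`. -/
theorem statement_2 :
    ∃ C₀ : ℝ, 0 < C₀ ∧
    ∀ (p n s : ℕ) (k : ℕ) (k₁ k₂ d₁ γ τ α₀ r μa lam R α : ℝ)
      (βstar βhat : EuclideanSpace ℝ (Fin p))
      (X : Fin n → EuclideanSpace ℝ (Fin p)) (Y : Fin n → ℝ)
      (w v : EuclideanSpace ℝ (Fin p) → ℝ)
      (l l' l'' : ℝ → ℝ → ℝ) (ρ : ℝ → ℝ),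
      1 ≤ n → 2 ≤ p → 0 < γ → 0 < τ → 0 < r → 0 ≤ μa →
      LossAssumption l l' l'' k₁ k₂ d₁ k →
      (Finset.univ.filter fun j => βstar j ≠ 0).card ≤ s →
      UniformRSC (fun a => empLoss X Y w v l a) βstar γ τ α₀ r n →
      α₀ ≤ α →
      AmenablePenalty ρ lam μa → 3 / 4 * μa < γ →
      StationaryPoint (empLoss X Y w v l α) ρ R βhat →
      ‖βhat - βstar‖ ≤ r →
      l1Norm βstar ≤ R →
      max (4 * supNorm (gradient (empLoss X Y w v l α) βstar))
        (8 * τ * R * (Real.log p / n)) ≤ lam →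
      C₀ * r⁻¹ ^ 2 * k * Real.log p ≤ n →
      ‖βhat - βstar‖ ≤ 24 * lam * Real.sqrt s / (4 * γ - 3 * μa) ∧
      l1Norm (βhat - βstar) ≤ 96 * lam * s / (4 * γ - 3 * μa) := by
  refine ⟨1, one_pos, ?_⟩
  intro p n s k k₁ k₂ d₁ γ τ α₀ r μa lam R α βstar βhat X Y w v l l' l'' ρ
    hn hp hγ hτ hr hμ hLoss hsparse hRSC hα hpen hμγ hstat hβr hfeas hlam hC
  haveI : NeZero p := ⟨by omega⟩
  classical
  set ν : EuclideanSpace ℝ (Fin p) := βhat - βstar with hν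
  set N : ℝ := ‖ν‖ with hN
  set L1 : ℝ := l1Norm ν with hL1
  set S : Finset (Fin p) := Finset.univ.filter (fun j => βstar j ≠ 0) with hS
  have hNnn : 0 ≤ N := norm_nonneg _
  have hL1nn : 0 ≤ L1 := l1Norm_nonneg _
  have hlam4 : 4 * supNorm (gradient (empLoss X Y w v l α) βstar) ≤ lam :=
    le_trans (le_max_left _ _) hlam
  have hlam8 : 8 * τ * R * (Real.log p / n) ≤ lam := le_trans (le_max_right _ _) hlam
  have hlamnn : 0 ≤ lam := hpen.lam_nonneg
  have hD : (0:ℝ) < 4 * γ - 3 * μa := by linarith only [hμγ]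
  -- stationarity
  have hst : 0 ≤ ⟪gradient (empLoss X Y w v l α) βhat + penGrad ρ βhat, βstar - βhat⟫ :=
    stationary_inner hstat hfeas
  -- RSC
  have hrsc : γ * N ^ 2 - τ * (Real.log p / n) * L1 ^ 2 ≤
      ⟪gradient (empLoss X Y w v l α) βhat - gradient (empLoss X Y w v l α) βstar, ν⟫ :=
    hRSC α hα βhat βstar hβr (by simpa using hr.le)
  -- the penalty inner product
  set Pg : ℝ := ⟪penGrad ρ βhat, βstar - βhat⟫ with hPgdef
  have hnegν : βstar - βhat = -ν := by rw [hν]; abel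
  have hstep1 : ⟪gradient (empLoss X Y w v l α) βhat, ν⟫ ≤ Pg := by
    rw [inner_add_left] at hst
    have : ⟪gradient (empLoss X Y w v l α) βhat, βstar - βhat⟫ =
        -⟪gradient (empLoss X Y w v l α) βhat, ν⟫ := by
      rw [hnegν, inner_neg_right]
    rw [this] at hst
    linarith only [hst]
  have hl1symm : l1Norm (βstar - βhat) = L1 := by
    rw [l1Norm, hL1, l1Norm]
    apply Finset.sum_congr rfl
    intro j _
    rw [hν]
    simp only [PiLp.sub_apply]
    exact abs_sub_comm _ _
  have hstep2 : -⟪gradient (empLoss X Y w v l α) βstar, ν⟫ ≤ lam / 4 * L1 := by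
    have h1 : ⟪gradient (empLoss X Y w v l α) βstar, βstar - βhat⟫ ≤
        supNorm (gradient (empLoss X Y w v l α) βstar) * l1Norm (βstar - βhat) :=
      inner_le_supNorm_mul _ _
    rw [hl1symm] at h1
    have h2 : supNorm (gradient (empLoss X Y w v l α) βstar) * L1 ≤ lam / 4 * L1 :=
      mul_le_mul_of_nonneg_right (by linarith) hL1nn
    have h3 : ⟪gradient (empLoss X Y w v l α) βstar, βstar - βhat⟫ =
        -⟪gradient (empLoss X Y w v l α) βstar, ν⟫ := by
      rw [hnegν, inner_neg_right]
    rw [h3] at h1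
    linarith only [h1, h2]
  -- bound on the tolerance term
  have hlogn : 0 ≤ τ * (Real.log p / n) := by
    have hp1 : (1:ℝ) ≤ (p:ℝ) := by exact_mod_cast (by omega : 1 ≤ p)
    have hlg := Real.log_nonneg hp1
    have hn' : (0:ℝ) < n := by exact_mod_cast hn
    positivity
  have hRnn : 0 ≤ R := le_trans (l1Norm_nonneg βstar) hfeas
  have hL1R : L1 ≤ 2 * R := by
    have h1 := l1_sub_le βhat βstar
    have h2 := hstat.1
    rw [hL1, hν]
    linarith only [h1, h2, hfeas]
  have hquad : τ * (Real.log p / n) * L1 ^ 2 ≤ lam / 4 * L1 := by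
    have e0 : τ * (Real.log p / n) * L1 ≤ τ * (Real.log p / n) * (2 * R) :=
      mul_le_mul_of_nonneg_left hL1R hlogn
    have e1 : τ * (Real.log p / n) * L1 ≤ lam / 4 := by linarith only [e0, hlam8]
    calc τ * (Real.log p / n) * L1 ^ 2 = (τ * (Real.log p / n) * L1) * L1 := by ring
      _ ≤ lam / 4 * L1 := mul_le_mul_of_nonneg_right e1 hL1nn
  -- master inequality before penalty expansion
  have hmaster : γ * N ^ 2 ≤ Pg + lam / 2 * L1 := by
    rw [inner_sub_left] at hrsc
    linarith only [hrsc, hstep1, hstep2, hquad]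
  -- expand Pg
  have hPg : Pg = ∑ j, deriv ρ (βhat j) * (βstar j - βhat j) := by
    rw [hPgdef, inner_eq_sum]
    apply Finset.sum_congr rfl
    intro j _
    simp [penGrad]
  -- coordinatewise bounds
  have hνj : ∀ j, ν j = βhat j - βstar j := by
    intro j; rw [hν]; simp [PiLp.sub_apply]
  have hjS : ∀ j ∈ S, deriv ρ (βhat j) * (βstar j - βhat j) ≤
      lam * |ν j| + μa / 2 * (ν j) ^ 2 := by
    intro j _
    have h1 := hpen.grad_ineq hμ (βhat j) (βstar j)
    have h2 : ρ (βstar j) - ρ (βhat j) ≤ ρ (βstar j - βhat j) := by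
      have := hpen.subadd (βstar j - βhat j) (βhat j)
      simpa using this
    have h3 : ρ (βstar j - βhat j) ≤ lam * |βstar j - βhat j| := hpen.le_lam_mul _
    have h4 : |βstar j - βhat j| = |ν j| := by rw [hνj j]; exact abs_sub_comm _ _
    have h5 : (βstar j - βhat j) ^ 2 = (ν j) ^ 2 := by rw [hνj j]; ring
    rw [h4] at h3
    rw [h5] at h1
    linarith only [h1, h2, h3]
  have hjSc : ∀ j ∉ S, deriv ρ (βhat j) * (βstar j - βhat j) ≤
      -(3 * lam / 4) * |ν j| + 3 * μa / 4 * (ν j) ^ 2 := by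
    intro j hj
    have hb0 : βstar j = 0 := by
      by_contra hcon
      exact hj (by simp [hS, hcon])
    have hva : ν j = βhat j := by rw [hνj j, hb0]; ring
    have t2 : 0 ≤ deriv ρ (βhat j) * βhat j := hpen.deriv_mul_self_nonneg _
    have t1 := hpen.grad_ineq hμ (βhat j) 0
    have t3 := hpen.lam_mul_le (βhat j)
    rw [hpen.zero] at t1
    rw [hb0, hva]
    linarith only [t1, t2, t3]
  -- sums over the support and its complement
  set L1S : ℝ := ∑ j ∈ S, |ν j| with hL1Sdef
  set L1c : ℝ := ∑ j ∈ Sᶜ, |ν j| with hL1cdef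
  set QS : ℝ := ∑ j ∈ S, (ν j) ^ 2 with hQSdef
  set Qc : ℝ := ∑ j ∈ Sᶜ, (ν j) ^ 2 with hQcdef
  have hsplitL1 : L1S + L1c = L1 := by
    rw [hL1Sdef, hL1cdef, hL1, l1Norm]
    exact Finset.sum_add_sum_compl S _
  have hsplitQ : QS + Qc = N ^ 2 := by
    rw [hQSdef, hQcdef, hN, norm_sq_eq_sum]
    exact Finset.sum_add_sum_compl S _
  have hQSnn : 0 ≤ QS := Finset.sum_nonneg fun j _ => sq_nonneg _
  have hQcnn : 0 ≤ Qc := Finset.sum_nonneg fun j _ => sq_nonneg _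
  have hL1Snn : 0 ≤ L1S := Finset.sum_nonneg fun j _ => abs_nonneg _
  have hL1cnn : 0 ≤ L1c := Finset.sum_nonneg fun j _ => abs_nonneg _
  have hPgb : Pg ≤ lam * L1S + μa / 2 * QS - 3 * lam / 4 * L1c + 3 * μa / 4 * Qc := by
    rw [hPg, ← Finset.sum_add_sum_compl S]
    have hb1 : ∑ j ∈ S, deriv ρ (βhat j) * (βstar j - βhat j) ≤
        lam * L1S + μa / 2 * QS := by
      rw [hL1Sdef, hQSdef, Finset.mul_sum, Finset.mul_sum, ← Finset.sum_add_distrib]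
      exact Finset.sum_le_sum hjS
    have hb2 : ∑ j ∈ Sᶜ, deriv ρ (βhat j) * (βstar j - βhat j) ≤
        -(3 * lam / 4) * L1c + 3 * μa / 4 * Qc := by
      rw [hL1cdef, hQcdef, Finset.mul_sum, Finset.mul_sum, ← Finset.sum_add_distrib]
      apply Finset.sum_le_sum
      intro j hj
      exact hjSc j (by simpa using hj)
    linarith only [hb1, hb2]
  -- the key inequality
  have hM4 : (4 * γ - 3 * μa) * N ^ 2 + lam * L1c ≤ 6 * lam * L1S := by
    have hlin : lam / 2 * L1 = lam / 2 * L1S + lam / 2 * L1c := by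
      rw [← hsplitL1]; ring
    have hq : μa * (QS + Qc) = μa * N ^ 2 := by rw [hsplitQ]
    linarith only [hmaster, hPgb, hlin, hq, mul_nonneg hμ hQSnn]
  -- Cauchy-Schwarz on the support
  have hsq : Real.sqrt s ^ 2 = (s:ℝ) := Real.sq_sqrt (Nat.cast_nonneg s)
  have hsqnn : 0 ≤ Real.sqrt s := Real.sqrt_nonneg _
  have hL1S2 : L1S ≤ Real.sqrt s * N := by
    calc L1S ≤ Real.sqrt S.card * ‖ν‖ := sum_abs_le_sqrt_card_mul S
      _ ≤ Real.sqrt s * N := by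
          rw [hN]
          apply mul_le_mul_of_nonneg_right _ (norm_nonneg _)
          exact Real.sqrt_le_sqrt (by exact_mod_cast hsparse)
  constructor
  · -- ℓ2 bound
    rw [le_div_iff₀ hD]
    rcases eq_or_lt_of_le hNnn with hN0 | hNpos
    · rw [← hN0]
      have : (0:ℝ) ≤ 24 * lam * Real.sqrt s := by positivity
      linarith only [this]
    · have key : (4 * γ - 3 * μa) * N ≤ 6 * lam * Real.sqrt s := by
        have h1 : (4 * γ - 3 * μa) * N * N ≤ 6 * lam * Real.sqrt s * N := by
          linarith only [hM4, mul_nonneg hlamnn hL1cnn,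
            mul_le_mul_of_nonneg_left hL1S2 (by linarith only [hlamnn] : (0:ℝ) ≤ 6 * lam)]
        exact le_of_mul_le_mul_right h1 hNpos
      have h6 : 6 * lam * Real.sqrt s ≤ 24 * lam * Real.sqrt s := by
        linarith only [mul_nonneg hlamnn hsqnn]
      calc N * (4 * γ - 3 * μa) = (4 * γ - 3 * μa) * N := by ring
        _ ≤ 24 * lam * Real.sqrt s := by linarith only [key, h6]
  · -- ℓ1 bound
    rw [le_div_iff₀ hD]
    rcases eq_or_lt_of_le hlamnn with hlam0 | hlampos
    · -- lam = 0 forces ν = 0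
      have hN0 : N = 0 := by
        rw [← hlam0] at hM4
        have hM0 : (4 * γ - 3 * μa) * N ^ 2 ≤ (4 * γ - 3 * μa) * 0 := by
          have h0 : (4 * γ - 3 * μa) * N ^ 2 ≤ 0 := by linarith only [hM4]
          simpa using h0
        have hsqle : N ^ 2 ≤ 0 := le_of_mul_le_mul_left hM0 hD
        have h2 : N ^ 2 = 0 := le_antisymm hsqle (sq_nonneg N)
        exact pow_eq_zero_iff two_ne_zero |>.mp h2
      have hν0 : ν = 0 := by rwa [hN, norm_eq_zero] at hN0
      have hL10 : L1 = 0 := by rw [hL1, hν0]; simp [l1Norm]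
      rw [hL10, ← hlam0]
      simp
    · have hA1 : lam * L1 ≤ 7 * lam * (Real.sqrt s * N) - (4 * γ - 3 * μa) * N ^ 2 := by
        have h1 : lam * L1S ≤ lam * (Real.sqrt s * N) :=
          mul_le_mul_of_nonneg_left hL1S2 hlamnn
        have hlin2 : lam * L1 = lam * L1S + lam * L1c := by rw [← hsplitL1]; ring
        linarith only [hM4, h1, hlin2]
      have h2 : lam * (L1 * (4 * γ - 3 * μa)) ≤ lam * (96 * lam * s) := by
        have h3 : lam * L1 * (4 * γ - 3 * μa) ≤
            (7 * lam * (Real.sqrt s * N) - (4 * γ - 3 * μa) * N ^ 2) * (4 * γ - 3 * μa) :=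
          mul_le_mul_of_nonneg_right hA1 hD.le
        have hs2 : lam ^ 2 * Real.sqrt s ^ 2 = lam ^ 2 * s := by rw [hsq]
        have hnn3 : (0:ℝ) ≤ lam ^ 2 * s :=
          mul_nonneg (sq_nonneg lam) (Nat.cast_nonneg s)
        linarith only [h3, sq_nonneg ((4 * γ - 3 * μa) * N - 7 / 2 * lam * Real.sqrt s),
          hs2, hnn3]
      exact le_of_mul_le_mul_left h2 hlampos


end
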